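/- In a finite medium, for every state P, the cardinality of the token content of P equals |T|/2, where T is the set of tokens. -/

import Mathlib

variable {S : Type*}

/-- Result of applying message `m` (a list of tokens) to state `P`. -/
def mApply (m : List (S → S)) (P : S) : S := m.foldl (fun s τ => τ s) P

/-- `τ'` is a reverse of `τ`. -/
def IsReverse (τ τ' : S → S) : Prop := ∀ P Q : S, P ≠ Q → (τ P = Q ↔ τ' Q = P)

/-- `(S, T)` is a token system. -/
def IsTokenSystem (T : Set (S → S)) : Prop :=
  Nontrivial S ∧ T.Nonempty ∧ ∀ τ ∈ T, τ ≠ id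

/-- `m` is a message of the token system with token set `T`. -/
def IsMsg (T : Set (S → S)) (m : List (S → S)) : Prop := ∀ τ ∈ m, τ ∈ T

/-- `m` is stepwise effective for `P`. -/
def StepwiseEff : List (S → S) → S → Prop
  | [], _ => True
  | τ :: rest, P => τ P ≠ P ∧ StepwiseEff rest (τ P)

/-- `m` is consistent: it contains no token together with a reverse of it. -/
def Consistent (m : List (S → S)) : Prop :=
  ∀ τ ∈ m, ∀ τ' ∈ m, ¬ IsReverse τ τ'

/-- `m` is concise for `P`. -/
def Concise (T : Set (S → S)) (m : List (S → S)) (P : S) : Prop :=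
  IsMsg T m ∧ Consistent m ∧ StepwiseEff m P ∧ m.Nodup

/-- `m` is a return message for `P`. -/
def IsReturn (m : List (S → S)) (P : S) : Prop :=
  StepwiseEff m P ∧ mApply m P = P

/-- `m` is vacuous: its indices partition into pairs of mutually reverse tokens. -/
def Vacuous (m : List (S → S)) : Prop :=
  ∃ σ : Equiv.Perm (Fin m.length),
    (∀ i, σ i ≠ i) ∧ (∀ i, σ (σ i) = i) ∧
    ∀ i, IsReverse (m.get i) (m.get (σ i))

/-- `(S, T)` is a medium: token system satisfying [Ma] and [Mb]. -/
def IsMedium (T : Set (S → S)) : Prop :=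
  IsTokenSystem T ∧
  (∀ P Q : S, P ≠ Q → ∃ m, Concise T m P ∧ mApply m P = Q) ∧
  (∀ (m : List (S → S)) (P : S), IsMsg T m → IsReturn m P → Vacuous m)

/-- Content of a message: its set of tokens. -/
def msgContent (m : List (S → S)) : Set (S → S) := {τ | τ ∈ m}

/-- Token content of a state `P`. -/
def SContent (T : Set (S → S)) (P : S) : Set (S → S) :=
  {τ | ∃ (V : S) (m : List (S → S)), Concise T m V ∧ mApply m V = P ∧ τ ∈ m}

/-- `mr` is the reverse message `τ̃ₙ…τ̃₁` of `m = τ₁…τₙ`. -/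
def IsReverseOfMsg (m mr : List (S → S)) : Prop :=
  List.Forall₂ (fun τ τ' => IsReverse τ τ' ∧ IsReverse τ' τ) m mr.reverse

/- ### Auxiliary lemmas -/

open Classical

lemma list_count_eq_card_filter {α : Type*} [DecidableEq α] (l : List α) (a : α) :
    l.count a = (Finset.univ.filter fun i : Fin l.length => l.get i = a).card := by
  conv_lhs => rw [← List.map_get_finRange l]
  rw [List.count, List.countP_map, List.countP_eq_length_filter, Finset.card, Fin.univ_def,
    Finset.filter_val]
  have : ((fun (x : α) => x == a) ∘ l.get) = (fun (x : Fin l.length) => decide (l.get x = a)) := by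
    funext x; cases h : (l.get x == a) <;> simp_all
  rw [this]
  rfl

lemma rev_symm {τ τ' : S → S} (h : IsReverse τ τ') : IsReverse τ' τ := by
  intro P Q hPQ
  exact (h Q P (Ne.symm hPQ)).symm

lemma rev_unique {τ a b : S → S} (ha : IsReverse τ a) (hb : IsReverse τ b) : a = b := by
  have key : ∀ (c d : S → S), IsReverse τ c → IsReverse τ d → ∀ Q, c Q ≠ Q → d Q = c Q := by
    intro c d hc hd Q hcQ
    have h1 : τ (c Q) = Q := (hc (c Q) Q hcQ).mpr rfl
    exact (hd (c Q) Q hcQ).mp h1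
  funext Q
  by_cases haQ : a Q = Q
  · by_cases hbQ : b Q = Q
    · rw [haQ, hbQ]
    · have := key b a hb ha Q hbQ
      rw [this] at haQ; exact absurd haQ hbQ
  · exact (key a b ha hb Q haQ).symm

lemma mApply_append (m m' : List (S → S)) (P : S) :
    mApply (m ++ m') P = mApply m' (mApply m P) := by
  simp [mApply, List.foldl_append]

lemma stepwiseEff_append (m m' : List (S → S)) (P : S) :
    StepwiseEff (m ++ m') P ↔ StepwiseEff m P ∧ StepwiseEff m' (mApply m P) := by
  induction m generalizing P with
  | nil => simp [StepwiseEff, mApply]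
  | cons a rest ih =>
      show (a P ≠ P ∧ StepwiseEff (rest ++ m') (a P)) ↔
        (a P ≠ P ∧ StepwiseEff rest (a P)) ∧ StepwiseEff m' (mApply rest (a P))
      rw [ih (a P), and_assoc]

lemma exists_ne_of_ne_id {τ : S → S} (h : τ ≠ id) : ∃ P, τ P ≠ P := by
  by_contra hc
  push_neg at hc
  exact h (funext hc)

lemma exists_rev {T : Set (S → S)} (hM : IsMedium T) {τ : S → S} (hτ : τ ∈ T) :
    ∃ τ' ∈ T, IsReverse τ τ' := by
  obtain ⟨⟨_, _, hne⟩, hMa, hMb⟩ := hM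
  obtain ⟨P, hP⟩ := exists_ne_of_ne_id (hne τ hτ)
  obtain ⟨m, hmc, hmA⟩ := hMa (τ P) P (fun h => hP h)
  have hmsg : IsMsg T (τ :: m) := by
    intro x hx
    rcases List.mem_cons.mp hx with h | h
    · exact h ▸ hτ
    · exact hmc.1 x h
  have hret : IsReturn (τ :: m) P := by
    refine ⟨⟨hP, ?_⟩, ?_⟩
    · exact hmc.2.2.1
    · show mApply (τ :: m) P = P
      have : mApply (τ :: m) P = mApply m (τ P) := rfl
      rw [this, hmA]
  obtain ⟨σ, hσ1, hσ2, hσ3⟩ := hMb (τ :: m) P hmsg hret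
  have hlen : 0 < (τ :: m).length := by simp
  set i0 : Fin (τ :: m).length := ⟨0, hlen⟩ with hi0
  have hg0 : (τ :: m).get i0 = τ := rfl
  have hj : σ i0 ≠ i0 := hσ1 i0
  have hjval : (σ i0).val ≠ 0 := by
    intro h
    exact hj (Fin.ext h)
  obtain ⟨k, hk⟩ : ∃ k, (σ i0).val = k + 1 := ⟨(σ i0).val - 1, by omega⟩
  have hkm : k < m.length := by
    have := (σ i0).isLt
    simp only [List.length_cons] at this
    omega
  have hget : (τ :: m).get (σ i0) = m.get ⟨k, hkm⟩ := by
    have : σ i0 = ⟨k + 1, by simp; omega⟩ := Fin.ext hk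
    rw [this]
    rfl
  refine ⟨m.get ⟨k, hkm⟩, hmc.1 _ (List.get_mem m ⟨k, hkm⟩), ?_⟩
  have := hσ3 i0
  rwa [hg0, hget] at this

lemma not_self_rev {T : Set (S → S)} (hM : IsMedium T) {τ : S → S} (hτ : τ ∈ T) :
    ¬ IsReverse τ τ := by
  intro hrev
  obtain ⟨⟨_, _, hne⟩, hMa, hMb⟩ := hM
  obtain ⟨P, hP⟩ := exists_ne_of_ne_id (hne τ hτ)
  -- concise message from P to τ P
  obtain ⟨m, hmc, hmA⟩ := hMa P (τ P) (fun h => hP h.symm)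
  have hτQ : τ (τ P) = P := (hrev P (τ P) (fun h => hP h.symm)).mp rfl
  have hmsg : IsMsg T (m ++ [τ]) := by
    intro x hx
    rcases List.mem_append.mp hx with h | h
    · exact hmc.1 x h
    · simp at h; exact h ▸ hτ
  have hret : IsReturn (m ++ [τ]) P := by
    constructor
    · rw [stepwiseEff_append]
      refine ⟨hmc.2.2.1, ?_⟩
      rw [hmA]
      exact ⟨by rw [hτQ]; exact fun h => hP h.symm, trivial⟩
    · rw [mApply_append, hmA]
      show τ (τ P) = P
      exact hτQ
  obtain ⟨σ, hσ1, hσ2, hσ3⟩ := hMb (m ++ [τ]) P hmsg hret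
  have hlen : m.length < (m ++ [τ]).length := by simp
  set iN : Fin (m ++ [τ]).length := ⟨m.length, hlen⟩ with hiN
  have hgN : (m ++ [τ]).get iN = τ := by
    simp [iN]
  have hj : σ iN ≠ iN := hσ1 iN
  have hjlt : (σ iN).val < m.length := by
    have := (σ iN).isLt
    simp only [List.length_append, List.length_singleton] at this
    have hne' : (σ iN).val ≠ m.length := fun h => hj (Fin.ext h)
    omega
  have hget : (m ++ [τ]).get (σ iN) = m.get ⟨(σ iN).val, hjlt⟩ := by
    simp [List.getElem_append_left hjlt]
  have hrev2 := hσ3 iN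
  rw [hgN, hget] at hrev2
  have : m.get ⟨(σ iN).val, hjlt⟩ = τ := rev_unique hrev2 hrev
  have hmem : τ ∈ m := this ▸ List.get_mem m ⟨(σ iN).val, hjlt⟩
  exact hmc.2.1 τ hmem τ hmem hrev

lemma exists_revMsg {T : Set (S → S)} (hM : IsMedium T) :
    ∀ (m : List (S → S)) (V : S), IsMsg T m → StepwiseEff m V →
      ∃ mr : List (S → S), IsMsg T mr ∧ StepwiseEff mr (mApply m V) ∧
        mApply mr (mApply m V) = V ∧
        ∀ τ τ' : S → S, τ ∈ T → IsReverse τ τ' → mr.count τ' = m.count τ := by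
  intro m
  induction m with
  | nil =>
      intro V _ _
      exact ⟨[], fun x hx => absurd hx List.not_mem_nil, trivial, rfl,
        fun τ τ' _ _ => rfl⟩
  | cons a rest ih =>
      intro V hmsg heff
      obtain ⟨ha, heff'⟩ := heff
      have haT : a ∈ T := hmsg a List.mem_cons_self
      obtain ⟨ar, harT, harrev⟩ := exists_rev hM haT
      obtain ⟨mr, hmr1, hmr2, hmr3, hmr4⟩ :=
        ih (a V) (fun x hx => hmsg x (List.mem_cons_of_mem a hx)) heff'
      have hAp : mApply (a :: rest) V = mApply rest (a V) := rfl
      have hara : ar (a V) = V := (harrev V (a V) (Ne.symm ha)).mp rfl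
      refine ⟨mr ++ [ar], ?_, ?_, ?_, ?_⟩
      · intro x hx
        rcases List.mem_append.mp hx with h | h
        · exact hmr1 x h
        · simp at h; exact h ▸ harT
      · rw [hAp, stepwiseEff_append]
        refine ⟨hmr2, ?_⟩
        rw [hmr3]
        exact ⟨by rw [hara]; exact Ne.symm ha, trivial⟩
      · rw [hAp, mApply_append, hmr3]
        show ar (a V) = V
        exact hara
      · intro τ τ' hτT hττ'
        rw [List.count_append, hmr4 τ τ' hτT hττ', List.count_cons, List.count_cons,
          List.count_nil]
        by_cases h : a = τ
        · subst h
          have : ar = τ' := rev_unique harrev hττ'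
          simp [this]
        · have : ar ≠ τ' := by
            intro he
            subst he
            exact h (rev_unique (rev_symm harrev) (rev_symm hττ'))
          simp [h, this]

lemma vacuous_count {M : List (S → S)} (hvac : Vacuous M) {τ τ' : S → S}
    (hrev : IsReverse τ τ') : M.count τ = M.count τ' := by
  obtain ⟨σ, hσ1, hσ2, hσ3⟩ := hvac
  rw [list_count_eq_card_filter, list_count_eq_card_filter]
  apply Finset.card_bij (fun i _ => σ i)
  · intro i hi
    simp only [Finset.mem_filter, Finset.mem_univ, true_and] at hi ⊢
    have := hσ3 i
    rw [hi] at this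
    exact rev_unique this hrev
  · intro i hi j hj h
    exact σ.injective h
  · intro j hj
    simp only [Finset.mem_filter, Finset.mem_univ, true_and] at hj
    refine ⟨σ j, ?_, (hσ2 j)⟩
    simp only [Finset.mem_filter, Finset.mem_univ, true_and]
    have := hσ3 j
    rw [hj] at this
    exact rev_unique this (rev_symm hrev)

/-- Not both a token and its reverse can lie in the content of `P`. -/
lemma not_both_in_content {T : Set (S → S)} (hM : IsMedium T) (P : S) {τ τ' : S → S}
    (hτT : τ ∈ T) (hτ'T : τ' ∈ T) (hrev : IsReverse τ τ')
    (h1 : τ ∈ SContent T P) (h2 : τ' ∈ SContent T P) : False := by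
  obtain ⟨V, m, hmC, hmA, hτm⟩ := h1
  obtain ⟨V', m', hm'C, hm'A, hτ'm'⟩ := h2
  have hMb := hM.2.2
  -- reverse message of m'
  obtain ⟨mr, hmr1, hmr2, hmr3, hmr4⟩ := exists_revMsg hM m' V' hm'C.1 hm'C.2.2.1
  rw [hm'A] at hmr2 hmr3
  -- counts in the pieces
  have hcm : m.count τ = 1 := List.count_eq_one_of_mem hmC.2.2.2 hτm
  have hcm' : m.count τ' = 0 := by
    rw [List.count_eq_zero]
    intro hmem
    exact hmC.2.1 τ hτm τ' hmem hrev
  have hcmr : mr.count τ = 1 := by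
    rw [hmr4 τ' τ hτ'T (rev_symm hrev)]
    exact List.count_eq_one_of_mem hm'C.2.2.2 hτ'm'
  have hcmr' : mr.count τ' = 0 := by
    rw [hmr4 τ τ' hτT hrev, List.count_eq_zero]
    intro hmem
    exact hm'C.2.1 τ' hτ'm' τ hmem (rev_symm hrev)
  by_cases hVV : V' = V
  · -- return message m ++ mr for V
    subst hVV
    have hmsg : IsMsg T (m ++ mr) := by
      intro x hx
      rcases List.mem_append.mp hx with h | h
      · exact hmC.1 x h
      · exact hmr1 x h
    have hret : IsReturn (m ++ mr) V' := by
      constructor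
      · rw [stepwiseEff_append, hmA]
        exact ⟨hmC.2.2.1, hmr2⟩
      · rw [mApply_append, hmA, hmr3]
    have hvac := hMb (m ++ mr) V' hmsg hret
    have := vacuous_count hvac hrev
    rw [List.count_append, List.count_append, hcm, hcm', hcmr, hcmr'] at this
    omega
  · obtain ⟨n, hnC, hnA⟩ := hM.2.1 V' V hVV
    have hmsg : IsMsg T (m ++ mr ++ n) := by
      intro x hx
      rcases List.mem_append.mp hx with h | h
      · rcases List.mem_append.mp h with h' | h'
        · exact hmC.1 x h'
        · exact hmr1 x h'
      · exact hnC.1 x h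
    have hret : IsReturn (m ++ mr ++ n) V := by
      constructor
      · rw [stepwiseEff_append, stepwiseEff_append, hmA, mApply_append, hmA, hmr3]
        exact ⟨⟨hmC.2.2.1, hmr2⟩, hnC.2.2.1⟩
      · rw [mApply_append, mApply_append, hmA, hmr3, hnA]
    have hvac := hMb (m ++ mr ++ n) V hmsg hret
    have hcount := vacuous_count hvac hrev
    have hn1 : n.count τ' ≤ 1 := List.nodup_iff_count_le_one.mp hnC.2.2.2 τ'
    have hnot : ¬ (τ ∈ n ∧ τ' ∈ n) := by
      rintro ⟨ha, hb⟩
      exact hnC.2.1 τ ha τ' hb hrev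
    have hn0 : n.count τ = 0 ∨ n.count τ' = 0 := by
      by_contra hc
      push_neg at hc
      obtain ⟨hc1, hc2⟩ := hc
      exact hnot ⟨List.count_pos_iff.mp (Nat.pos_of_ne_zero hc1),
        List.count_pos_iff.mp (Nat.pos_of_ne_zero hc2)⟩
    rw [List.count_append, List.count_append, List.count_append, List.count_append,
      hcm, hcm', hcmr, hcmr'] at hcount
    omega

/-- For every token, it or its reverse lies in the content of `P`. -/
lemma one_in_content {T : Set (S → S)} (hM : IsMedium T) (P : S) {τ τ' : S → S}
    (hτT : τ ∈ T) (hrev : IsReverse τ τ') :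
    τ ∈ SContent T P ∨ τ' ∈ SContent T P := by
  obtain ⟨W, hW⟩ := exists_ne_of_ne_id (hM.1.2.2 τ hτT)
  by_cases hXP : τ W = P
  · left
    refine ⟨W, [τ], ⟨?_, ?_, ⟨hW, trivial⟩, List.nodup_singleton τ⟩, hXP, List.mem_singleton.mpr rfl⟩
    · intro x hx; simp at hx; exact hx ▸ hτT
    · intro a ha b hb h
      simp at ha hb
      subst ha; subst hb
      exact not_self_rev hM hτT h
  · obtain ⟨m, hmC, hmA⟩ := hM.2.1 (τ W) P hXP
    by_cases hτm : τ ∈ m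
    · exact Or.inl ⟨τ W, m, hmC, hmA, hτm⟩
    · by_cases hrm : ∃ x ∈ m, IsReverse τ x
      · obtain ⟨x, hxm, hxrev⟩ := hrm
        right
        have : x = τ' := rev_unique hxrev hrev
        exact this ▸ ⟨τ W, m, hmC, hmA, hxm⟩
      · push_neg at hrm
        left
        refine ⟨W, τ :: m, ⟨?_, ?_, ⟨hW, hmC.2.2.1⟩, ?_⟩, ?_, List.mem_cons_self⟩
        · intro x hx
          rcases List.mem_cons.mp hx with h | h
          · exact h ▸ hτT
          · exact hmC.1 x h
        · intro a ha b hb h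
          rcases List.mem_cons.mp ha with ha' | ha' <;> rcases List.mem_cons.mp hb with hb' | hb'
          · subst ha'; subst hb'; exact not_self_rev hM hτT h
          · subst ha'; exact hrm b hb' h
          · subst hb'; exact hrm a ha' (rev_symm h)
          · exact hmC.2.1 a ha' b hb' h
        · exact List.nodup_cons.mpr ⟨hτm, hmC.2.2.2⟩
        · show mApply m (τ W) = P
          exact hmA

/-- In a finite medium, the cardinality of the token content of any state is `|T| / 2`. -/
theorem stmt6 {S : Type*} [Finite S] {T : Set (S → S)} (hM : IsMedium T) (P : S) :
    (SContent T P).ncard = T.ncard / 2 := by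
  classical
  set C := SContent T P with hC
  have hCT : C ⊆ T := by
    rintro τ ⟨V, m, hmC, _, hτm⟩
    exact hmC.1 τ hτm
  -- the reverse function
  let f : (S → S) → (S → S) := fun τ => if h : ∃ τ' ∈ T, IsReverse τ τ' then h.choose else id
  have hf : ∀ τ ∈ T, f τ ∈ T ∧ IsReverse τ (f τ) := by
    intro τ hτ
    have h := exists_rev hM hτ
    simp only [f, dif_pos h]
    exact ⟨h.choose_spec.1, h.choose_spec.2⟩
  have hff : ∀ τ ∈ T, f (f τ) = τ := by
    intro τ hτ
    obtain ⟨h1, h2⟩ := hf τ hτ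
    obtain ⟨h3, h4⟩ := hf (f τ) h1
    exact rev_unique h4 (rev_symm h2)
  have hone : ∀ τ ∈ T, τ ∈ C ∨ f τ ∈ C := fun τ hτ => one_in_content hM P hτ (hf τ hτ).2
  have hnotboth : ∀ τ ∈ T, ¬ (τ ∈ C ∧ f τ ∈ C) := by
    rintro τ hτ ⟨h1, h2⟩
    exact not_both_in_content hM P hτ (hf τ hτ).1 (hf τ hτ).2 h1 h2
  -- T = C ∪ f '' C, disjoint
  have hunion : T = C ∪ f '' C := by
    apply Set.Subset.antisymm
    · intro τ hτ
      rcases hone τ hτ with h | h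
      · exact Or.inl h
      · exact Or.inr ⟨f τ, h, hff τ hτ⟩
    · rintro τ (h | ⟨x, hx, rfl⟩)
      · exact hCT h
      · exact (hf x (hCT hx)).1
  have hdisj : Disjoint C (f '' C) := by
    rw [Set.disjoint_left]
    rintro τ hτ ⟨x, hx, rfl⟩
    exact hnotboth x (hCT hx) ⟨hx, hτ⟩
  have hfin : Finite (S → S) := Pi.finite
  have hCfin : C.Finite := Set.toFinite C
  have hinj : Set.InjOn f C := by
    intro a ha b hb h
    have := congrArg f h
    rwa [hff a (hCT ha), hff b (hCT hb)] at this
  have hcard : T.ncard = C.ncard + (f '' C).ncard := by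
    rw [hunion]
    exact Set.ncard_union_eq hdisj hCfin (hCfin.image f)
  rw [Set.ncard_image_of_injOn hinj] at hcard
  omega
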